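/- arXiv:1911.04272 — 4 statements merged into one kernel-verified Lean document; each statement's English description precedes it below -/
import Mathlib

section
/- Let H be a real Hilbert space and (H_i) a decreasing net of closed affine subspaces (translates of closed linear subspaces) of H indexed by a directed set. Then the following are equivalent: (i) the intersection of all H_i is empty; (ii) the distance d(x, H_i) tends to infinity for some x in H; (iii) the distance d(x, H_i) tends to infinity for every x in H. -/
open Filter Metric Topology

/-- A closed affine subspace of a real Hilbert space: a nonempty translate of a
closed linear subspace. -/
def IsClosedAffineSubspace {H : Type*} [NormedAddCommGroup H]
    [InnerProductSpace ℝ H] (K : Set H) : Prop :=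
  ∃ (p : H) (E : Submodule ℝ H), IsClosed (E : Set H) ∧ K = (p + ·) '' (E : Set H)

/-- for a decreasing net of closed affine subspaces of a real Hilbert
space, empty intersection is equivalent to the distance from some (equivalently,
every) point tending to infinity. -/
theorem empty_intersection_iff_dist_tendsto_atTop
    {H : Type*} [NormedAddCommGroup H] [InnerProductSpace ℝ H] [CompleteSpace H]
    {ι : Type*} [Nonempty ι] [Preorder ι] [IsDirected ι (· ≤ ·)]
    (K : ι → Set H) (hK : ∀ i, IsClosedAffineSubspace (K i))
    (hmono : ∀ i j, i ≤ j → K j ⊆ K i) :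
    ((⋂ i, K i) = ∅ ↔ ∃ x : H, Tendsto (fun i => infDist x (K i)) atTop atTop) ∧
    ((⋂ i, K i) = ∅ ↔ ∀ x : H, Tendsto (fun i => infDist x (K i)) atTop atTop) := by
  have hne : ∀ i, (K i).Nonempty := fun i => by
    obtain ⟨p, E, hE, hKe⟩ := hK i
    exact ⟨p, hKe ▸ ⟨0, E.zero_mem, by simp⟩⟩
  have hcl : ∀ i, IsClosed (K i) := fun i => by
    obtain ⟨p, E, hE, hKe⟩ := hK i
    rw [hKe]
    exact (Homeomorph.addLeft p).isClosedMap _ hE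
  have hconv : ∀ i, Convex ℝ (K i) := fun i => by
    obtain ⟨p, E, hE, hKe⟩ := hK i
    rw [hKe]
    exact E.convex.translate p
  -- the hard direction
  have main : (⋂ i, K i) = ∅ → ∀ x : H, Tendsto (fun i => infDist x (K i)) atTop atTop := by
    intro hempty x
    by_contra hnot
    obtain ⟨R, hR⟩ : ∃ R, ∃ᶠ i in atTop, infDist x (K i) < R := by
      by_contra h
      push_neg at h
      exact hnot <| tendsto_atTop.2 fun b => h b
    set d : ι → ℝ := fun i => infDist x (K i) with hd
    have hdmono : Monotone d := fun i j hij =>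
      infDist_le_infDist_of_subset (hmono i j hij) (hne j)
    have hbdd : ∀ i, d i ≤ R := by
      intro i
      obtain ⟨j, hij, hj⟩ := frequently_atTop.1 hR i
      exact (hdmono hij).trans hj.le
    have hbddA : BddAbove (Set.range d) := ⟨R, by rintro _ ⟨i, rfl⟩; exact hbdd i⟩
    set c := ⨆ i, d i with hc
    have hdc : Tendsto d atTop (𝓝 c) := tendsto_atTop_ciSup hdmono hbddA
    have hdle : ∀ i, d i ≤ c := fun i => le_ciSup hbddA i
    have hd0 : ∀ i, (0:ℝ) ≤ d i := fun i => infDist_nonneg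
    -- choose minimizers
    have hproj : ∀ i, ∃ v ∈ K i, ‖x - v‖ = d i := by
      intro i
      obtain ⟨v, hv, hveq⟩ := exists_norm_eq_iInf_of_complete_convex (hne i)
        ((hcl i).isComplete) (hconv i) x
      refine ⟨v, hv, hveq.trans ?_⟩
      rw [hd]
      simp only [infDist_eq_iInf, dist_eq_norm]
    choose v hvmem hvnorm using hproj
    -- key estimate via the parallelogram law
    have key : ∀ i k, i ≤ k → ‖v k - v i‖ ^ 2 ≤ 2 * (c ^ 2 - d i ^ 2) := by
      intro i k hik
      set m := (1/2 : ℝ) • v i + (1/2 : ℝ) • v k with hm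
      have hmK : m ∈ K i :=
        (hconv i) (hvmem i) (hmono i k hik (hvmem k)) (by norm_num) (by norm_num) (by norm_num)
      have hdm : d i ≤ ‖x - m‖ := by
        rw [hd, ← dist_eq_norm]
        exact infDist_le_dist_of_mem hmK
      have hpar := parallelogram_law_with_norm ℝ (x - v i) (x - v k)
      have hab : x - v i + (x - v k) = (2:ℝ) • (x - m) := by
        rw [hm]; module
      have hamb : x - v i - (x - v k) = v k - v i := by abel
      rw [hab, hamb, norm_smul] at hpar
      simp only [Real.norm_ofNat] at hpar
      nlinarith [hpar, hvnorm i, hvnorm k, hdm, hdle k, hd0 i, hd0 k, norm_nonneg (x - m),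
        norm_nonneg (v k - v i)]
    -- the net of projections is Cauchy
    have hcauchy : CauchySeq v := by
      rw [CauchySeq, cauchy_map_iff']
      rw [Metric.uniformity_basis_dist.tendsto_right_iff]
      intro ε hε
      have htends : Tendsto (fun i => 2 * (c ^ 2 - d i ^ 2)) atTop (𝓝 0) := by
        have : Tendsto (fun i => 2 * (c ^ 2 - d i ^ 2)) atTop (𝓝 (2 * (c ^ 2 - c ^ 2))) :=
          (tendsto_const_nhds.sub (hdc.pow 2)).const_mul 2
        simpa using this
      have hev : ∀ᶠ i in atTop, 2 * (c ^ 2 - d i ^ 2) < (ε / 2) ^ 2 :=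
        htends.eventually (gt_mem_nhds (by positivity))
      obtain ⟨N, hN⟩ := eventually_atTop.1 hev
      filter_upwards [prod_mem_prod (Ici_mem_atTop N) (Ici_mem_atTop N)] with p hp
      obtain ⟨hi, hj⟩ := hp
      obtain ⟨k, hik, hjk⟩ := exists_ge_ge p.1 p.2
      have b1 : ‖v k - v p.1‖ ^ 2 < (ε / 2) ^ 2 := by
        have := key p.1 k hik
        have h2 : 2 * (c ^ 2 - d p.1 ^ 2) ≤ 2 * (c ^ 2 - d N ^ 2) := by
          nlinarith [hdmono hi, hd0 N]
        linarith [hN N le_rfl]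
      have b2 : ‖v k - v p.2‖ ^ 2 < (ε / 2) ^ 2 := by
        have := key p.2 k hjk
        have h2 : 2 * (c ^ 2 - d p.2 ^ 2) ≤ 2 * (c ^ 2 - d N ^ 2) := by
          nlinarith [hdmono hj, hd0 N]
        linarith [hN N le_rfl]
      have hε2 : (0:ℝ) ≤ ε / 2 := by positivity
      have b1' : ‖v k - v p.1‖ < ε / 2 := lt_of_pow_lt_pow_left₀ 2 hε2 b1
      have b2' : ‖v k - v p.2‖ < ε / 2 := lt_of_pow_lt_pow_left₀ 2 hε2 b2
      calc dist (v p.1) (v p.2) ≤ dist (v p.1) (v k) + dist (v k) (v p.2) := dist_triangle _ _ _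
        _ < ε / 2 + ε / 2 := by
            rw [dist_eq_norm, dist_eq_norm, ← norm_neg (v p.1 - v k)]
            simp only [neg_sub]
            exact add_lt_add b1' b2'
        _ = ε := by ring
    obtain ⟨y, hy⟩ := cauchySeq_tendsto_of_complete hcauchy
    have hymem : y ∈ ⋂ i, K i := Set.mem_iInter.2 fun i =>
      (hcl i).mem_of_tendsto hy
        (Filter.eventually_of_mem (Ici_mem_atTop i) fun j hj => hmono i j hj (hvmem j))
    rw [hempty] at hymem
    exact hymem
  -- the converse direction
  have conv : (∃ x : H, Tendsto (fun i => infDist x (K i)) atTop atTop) → (⋂ i, K i) = ∅ := by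
    rintro ⟨x, hx⟩
    rw [Set.eq_empty_iff_forall_notMem]
    intro y hy
    obtain ⟨i, hi⟩ := (hx.eventually (eventually_ge_atTop (dist x y + 1))).exists
    have h1 : infDist x (K i) ≤ dist x y := infDist_le_dist_of_mem (Set.mem_iInter.1 hy i)
    linarith
  exact ⟨⟨fun h => ⟨0, main h 0⟩, conv⟩, ⟨main, fun h => conv ⟨0, h 0⟩⟩⟩
end

section
/- Let G be a locally compact group with a Haar measure m, H a real Hilbert space with an affine isometric action α of G, and Λ ⊆ G a countable uniformly discrete subset (there is a compact neighborhood K of the identity such that the sets gK, g ∈ Λ, are pairwise disjoint). Fix x, y ∈ H. Then the exponent of convergence of the series ∑_{g ∈ Λ} e^{-s‖gx−y‖²} is at most the exponent of convergence of the integral ∫_G e^{-s‖gx−y‖²} dm(g). -/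
open MeasureTheory
open scoped ENNReal

/-- let `α` be a continuous affine isometric action of a locally compact
group `G` (with Haar measure `m`) on a real Hilbert space `H`, and `Λ ⊆ G` a countable
uniformly discrete subset.  Then the exponent of convergence of the series
`∑_{g ∈ Λ} e^{-s ‖gx - y‖²}` is at most the exponent of convergence of the
Poincaré integral `∫_G e^{-s ‖gx - y‖²} dm(g)`. -/
theorem exponent_series_le_exponent_integral
    {G : Type*} [Group G] [TopologicalSpace G] [IsTopologicalGroup G]
    [LocallyCompactSpace G] [MeasurableSpace G] [BorelSpace G]
    (m : Measure G) [m.IsHaarMeasure]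
    {H : Type*} [NormedAddCommGroup H] [InnerProductSpace ℝ H] [CompleteSpace H]
    (α : G →* (H ≃ᵢ H)) (hcont : ∀ z : H, Continuous fun g : G => α g z)
    (Λ : Set G) (hΛ : Λ.Countable)
    (hdisc : ∃ K : Set G, K ∈ nhds (1 : G) ∧ IsCompact K ∧
      (Λ.PairwiseDisjoint fun g => (g * ·) '' K))
    (x y : H) :
    sInf {s : ℝ≥0∞ | ∃ r : ℝ, s = ENNReal.ofReal r ∧ 0 < r ∧
        ∑' g : Λ, ENNReal.ofReal (Real.exp (-r * ‖α (g : G) x - y‖ ^ 2)) < ⊤}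
      ≤ sInf {s : ℝ≥0∞ | ∃ r : ℝ, s = ENNReal.ofReal r ∧ 0 < r ∧
        ∫⁻ g, ENNReal.ofReal (Real.exp (-r * ‖α g x - y‖ ^ 2)) ∂m < ⊤} := by
  obtain ⟨K₀, hK₀nhds, hK₀comp, hK₀disj⟩ := hdisc
  obtain ⟨K, hKnhds, hKclosed, hKsub⟩ := exists_mem_nhds_isClosed_subset hK₀nhds
  have hKcomp : IsCompact K := hK₀comp.of_isClosed_subset hKclosed hKsub
  have hKdisj : Λ.PairwiseDisjoint fun g => (g * ·) '' K := fun a ha b hb hab =>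
    (hK₀disj ha hb hab).mono (Set.image_mono hKsub) (Set.image_mono hKsub)
  -- bound on displacement over K
  have hcontK : Continuous fun h : G => ‖α h x - x‖ :=
    ((hcont x).sub continuous_const).norm
  obtain ⟨C, hC⟩ := (hKcomp.bddAbove_image hcontK.continuousOn)
  have hC' : ∀ h ∈ K, ‖α h x - x‖ ≤ C := fun h hh =>
    hC (Set.mem_image_of_mem _ hh)
  have hC0 : 0 ≤ C := le_trans (norm_nonneg _) (hC' 1 (mem_of_mem_nhds hKnhds))
  have hKmeas : MeasurableSet K := hKclosed.measurableSet
  have hmKpos : 0 < m K := m.measure_pos_of_mem_nhds hKnhds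
  have hmKfin : m K < ⊤ := hKcomp.measure_lt_top
  apply le_sInf
  rintro b ⟨r, rfl, hr, hint⟩
  -- it suffices to show sInf ≤ ofReal (r + ε) for all ε > 0
  refine ENNReal.le_of_forall_pos_le_add fun ε hε _ => ?_
  have hεpos : (0:ℝ) < ε := hε
  rw [show ENNReal.ofReal r + (ε:ℝ≥0∞) = ENNReal.ofReal (r + ε) by
    rw [ENNReal.ofReal_add hr.le hεpos.le, ENNReal.ofReal_coe_nnreal]]
  apply sInf_le
  refine ⟨r + ε, rfl, by linarith, ?_⟩
  set r' : ℝ := r + ε with hr'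
  -- key pointwise estimate
  set D : ℝ := r * (1 + r / ε) * C ^ 2 with hD
  have key : ∀ g ∈ Λ, ∀ h ∈ K,
      Real.exp (-r' * ‖α g x - y‖ ^ 2)
        ≤ Real.exp D * Real.exp (-r * ‖α (g * h) x - y‖ ^ 2) := by
    intro g hg h hh
    rw [← Real.exp_add]
    apply Real.exp_le_exp.2
    have hgh : ‖α (g * h) x - y‖ ≤ ‖α g x - y‖ + C := by
      have h1 : ‖α (g * h) x - α g x‖ = ‖α h x - x‖ := by
        rw [map_mul]
        calc ‖α g (α h x) - α g x‖ = dist (α g (α h x)) (α g x) := by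
              rw [dist_eq_norm]
            _ = dist (α h x) x := (α g).isometry.dist_eq _ _
            _ = ‖α h x - x‖ := dist_eq_norm _ _
      calc ‖α (g * h) x - y‖ ≤ ‖α (g * h) x - α g x‖ + ‖α g x - y‖ := by
            have := norm_sub_le_norm_sub_add_norm_sub (α (g*h) x) (α g x) y
            linarith [norm_add_le (α (g*h) x - α g x) (α g x - y)]
          _ = ‖α h x - x‖ + ‖α g x - y‖ := by rw [h1]
          _ ≤ C + ‖α g x - y‖ := by linarith [hC' h hh]
          _ = ‖α g x - y‖ + C := by ring
    have hsq : ‖α (g * h) x - y‖ ^ 2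
        ≤ (1 + ε / r) * ‖α g x - y‖ ^ 2 + (1 + r / ε) * C ^ 2 := by
      have h2 : ‖α (g * h) x - y‖ ^ 2 ≤ (‖α g x - y‖ + C) ^ 2 := by
        apply sq_le_sq'
        · nlinarith [norm_nonneg (α (g*h) x - y), norm_nonneg (α g x - y)]
        · exact hgh
      have h3 : (‖α g x - y‖ + C) ^ 2
          ≤ (1 + ε / r) * ‖α g x - y‖ ^ 2 + (1 + r / ε) * C ^ 2 := by
        have amgm : 2 * ‖α g x - y‖ * C
            ≤ (ε / r) * ‖α g x - y‖ ^ 2 + (r / ε) * C ^ 2 := by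
          have := sq_nonneg (Real.sqrt (ε / r) * ‖α g x - y‖ - Real.sqrt (r / ε) * C)
          have hs1 : Real.sqrt (ε / r) ^ 2 = ε / r :=
            Real.sq_sqrt (by positivity)
          have hs2 : Real.sqrt (r / ε) ^ 2 = r / ε :=
            Real.sq_sqrt (by positivity)
          have hs3 : Real.sqrt (ε / r) * Real.sqrt (r / ε) = 1 := by
            rw [← Real.sqrt_mul (by positivity)]
            rw [div_mul_div_comm, mul_comm]
            rw [div_self (by positivity)]
            exact Real.sqrt_one
          nlinarith
        nlinarith
      linarith
    have hmul : r * ((1 + ε / r) * ‖α g x - y‖ ^ 2) = r' * ‖α g x - y‖ ^ 2 := by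
      field_simp [hr']
      rw [hr']; ring
    nlinarith [hsq, hr.le]
  -- measurability of the integrand
  have hmeas : ∀ c : ℝ, Measurable fun g : G =>
      ENNReal.ofReal (Real.exp (-c * ‖α g x - y‖ ^ 2)) := by
    intro c
    apply ENNReal.measurable_ofReal.comp
    exact (Real.continuous_exp.comp
      ((continuous_const.mul (((hcont x).sub continuous_const).norm.pow 2)))).measurable
  -- per-element integral estimate
  have hKimage : ∀ g : G, ∫⁻ z in (g * ·) '' K,
      ENNReal.ofReal (Real.exp (-r * ‖α z x - y‖ ^ 2)) ∂m
      = ∫⁻ h in K, ENNReal.ofReal (Real.exp (-r * ‖α (g * h) x - y‖ ^ 2)) ∂m := by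
    intro g
    exact ((measurePreserving_mul_left m g).setLIntegral_comp_emb
      (Homeomorph.mulLeft g).measurableEmbedding _ K).symm
  have step : ∀ g ∈ Λ,
      ENNReal.ofReal (Real.exp (-r' * ‖α g x - y‖ ^ 2)) * m K
        ≤ ENNReal.ofReal (Real.exp D) *
          ∫⁻ z in (g * ·) '' K,
            ENNReal.ofReal (Real.exp (-r * ‖α z x - y‖ ^ 2)) ∂m := by
    intro g hg
    rw [hKimage g, ← lintegral_const_mul _ (by
      exact ((hmeas r).comp (measurable_const_mul g)))]
    calc ENNReal.ofReal (Real.exp (-r' * ‖α g x - y‖ ^ 2)) * m K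
        = ∫⁻ _ in K, ENNReal.ofReal (Real.exp (-r' * ‖α g x - y‖ ^ 2)) ∂m := by
          rw [setLIntegral_const]
      _ ≤ ∫⁻ h in K, ENNReal.ofReal (Real.exp D) *
            ENNReal.ofReal (Real.exp (-r * ‖α (g * h) x - y‖ ^ 2)) ∂m := by
          refine setLIntegral_mono
            (Measurable.const_mul ((hmeas r).comp (measurable_const_mul g)) _)
            fun h hh => ?_
          rw [← ENNReal.ofReal_mul (Real.exp_nonneg _)]
          exact ENNReal.ofReal_le_ofReal (key g hg h hh)
  -- sum over Λ
  have hΛc : Countable Λ := hΛ.to_subtype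
  have hdisjsum : ∑' g : Λ, ∫⁻ z in ((g : G) * ·) '' K,
      ENNReal.ofReal (Real.exp (-r * ‖α z x - y‖ ^ 2)) ∂m
      ≤ ∫⁻ g, ENNReal.ofReal (Real.exp (-r * ‖α g x - y‖ ^ 2)) ∂m := by
    rw [← lintegral_iUnion (fun g : Λ =>
      (isClosedMap_mul_left (g:G) K hKclosed).measurableSet)
      (fun i j hij => hKdisj i.2 j.2 (Subtype.coe_injective.ne hij)) _]
    exact lintegral_mono_set (Set.subset_univ _) |>.trans (by
      rw [Measure.restrict_univ])
  have main : (∑' g : Λ, ENNReal.ofReal (Real.exp (-r' * ‖α (g:G) x - y‖ ^ 2))) * m K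
      ≤ ENNReal.ofReal (Real.exp D) *
        ∫⁻ g, ENNReal.ofReal (Real.exp (-r * ‖α g x - y‖ ^ 2)) ∂m := by
    rw [← ENNReal.tsum_mul_right]
    calc ∑' g : Λ, ENNReal.ofReal (Real.exp (-r' * ‖α (g:G) x - y‖ ^ 2)) * m K
        ≤ ∑' g : Λ, ENNReal.ofReal (Real.exp D) *
            ∫⁻ z in ((g:G) * ·) '' K,
              ENNReal.ofReal (Real.exp (-r * ‖α z x - y‖ ^ 2)) ∂m :=
          ENNReal.tsum_le_tsum fun g => step g g.2
      _ = ENNReal.ofReal (Real.exp D) * ∑' g : Λ, ∫⁻ z in ((g:G) * ·) '' K,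
              ENNReal.ofReal (Real.exp (-r * ‖α z x - y‖ ^ 2)) ∂m :=
          ENNReal.tsum_mul_left
      _ ≤ _ := mul_le_mul_right hdisjsum _
  -- conclude
  have hlt : ENNReal.ofReal (Real.exp D) *
      ∫⁻ g, ENNReal.ofReal (Real.exp (-r * ‖α g x - y‖ ^ 2)) ∂m < ⊤ :=
    ENNReal.mul_lt_top ENNReal.ofReal_lt_top hint
  by_contra htop
  push_neg at htop
  rw [top_le_iff] at htop
  rw [htop, ENNReal.top_mul hmKpos.ne'] at main
  exact hlt.ne (top_le_iff.mp main)
end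

section
/- Let T be a tree quadratically embedded in a real Hilbert space H (so d(x,y) = ‖x−y‖² for vertices x,y), let S ⊆ T be a nonempty subtree, K the closed affine span of S in H, and P_K : H → K the orthogonal projection. For a vertex v ∈ T, let P_S(v) be the unique vertex of S minimizing the graph distance d(v, ·) on S. Then P_K(v) = P_S(v) for every vertex v ∈ T. -/
open scoped InnerProductSpace

open SimpleGraph

namespace TreeProjAux

variable {V : Type*} {G : SimpleGraph V}

lemma getVert_mem_support {x y : V} (p : G.Walk x y) (i : ℕ) :
    p.getVert i ∈ p.support := by
  induction p generalizing i with
  | nil =>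
    rw [Walk.getVert_of_length_le _ (Nat.zero_le i)]
    exact Walk.end_mem_support _
  | cons h q ih =>
    cases i with
    | zero => simp [Walk.getVert_zero]
    | succ n =>
      rw [Walk.getVert_cons_succ]
      exact List.mem_cons_of_mem _ (ih n)

lemma getVert_injOn {x y : V} {p : G.Walk x y} (hp : p.IsPath) :
    ∀ i j, i ≤ p.length → j ≤ p.length → p.getVert i = p.getVert j → i = j := by
  induction p with
  | nil => intro i j hi hj _; simp at hi hj; omega
  | cons h q ih =>
    intro i j hi hj hij
    obtain ⟨hq, hx⟩ := (Walk.cons_isPath_iff h q).mp hp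
    match i, j with
    | 0, 0 => rfl
    | 0, n + 1 =>
      exfalso
      rw [Walk.getVert_zero, Walk.getVert_cons_succ] at hij
      exact hx (hij ▸ getVert_mem_support q n)
    | n + 1, 0 =>
      exfalso
      rw [Walk.getVert_zero, Walk.getVert_cons_succ] at hij
      exact hx (hij ▸ getVert_mem_support q n)
    | n + 1, k + 1 =>
      rw [Walk.getVert_cons_succ, Walk.getVert_cons_succ] at hij
      simp only [Walk.length_cons] at hi hj
      have := ih hq n k (by omega) (by omega) hij
      omega

lemma path_length_eq_dist (hG : G.IsTree) {x y : V} (p : G.Walk x y) (hp : p.IsPath) :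
    p.length = G.dist x y := by
  classical
  obtain ⟨q, hq⟩ := hG.isConnected.exists_walk_length_eq_dist x y
  have huniq : (⟨p, hp⟩ : G.Path x y) = ⟨q.bypass, q.bypass_isPath⟩ :=
    hG.IsAcyclic.path_unique _ _
  have hpe : p = q.bypass := congrArg Subtype.val huniq
  refine le_antisymm ?_ (SimpleGraph.dist_le p)
  calc p.length = q.bypass.length := by rw [hpe]
    _ ≤ q.length := q.length_bypass_le
    _ = G.dist x y := hq

lemma concat_isPath {x y z : V} {p : G.Walk x y} (hp : p.IsPath) (h : G.Adj y z)
    (hz : z ∉ p.support) : (p.concat h).IsPath := by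
  rw [Walk.isPath_def, Walk.support_concat]
  simp [List.nodup_append, hp.support_nodup, hz]
  exact fun a ha hb => hz (hb ▸ ha)

lemma adj_dist_ne (hG : G.IsTree) (v : V) {x y : V} (h : G.Adj x y) :
    G.dist v x ≠ G.dist v y := by
  classical
  intro heq
  obtain ⟨q, hq⟩ := hG.isConnected.exists_walk_length_eq_dist v x
  set p := q.bypass with hpdef
  have hp : p.IsPath := q.bypass_isPath
  have hlen : p.length = G.dist v x := path_length_eq_dist hG p hp
  by_cases hy : y ∈ p.support
  · have h1 : (p.takeUntil y hy).length = G.dist v y :=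
      path_length_eq_dist hG _ (hp.takeUntil hy)
    have hlen2 : (p.takeUntil y hy).length + (p.dropUntil y hy).length = p.length := by
      rw [← Walk.length_append, Walk.take_spec]
    have hd : G.dist y x ≤ (p.dropUntil y hy).length := SimpleGraph.dist_le _
    have hyx : G.dist y x ≠ 0 := by
      simp only [ne_eq, hG.isConnected.dist_eq_zero_iff]
      exact h.ne'
    omega
  · have hp' : (p.concat h).IsPath := concat_isPath hp h hy
    have h2 : (p.concat h).length = G.dist v y := path_length_eq_dist hG _ hp'
    rw [Walk.length_concat, hlen, heq] at h2
    omega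

lemma adj_dist_cases (hG : G.IsTree) (v : V) {x y : V} (h : G.Adj x y) :
    G.dist v y = G.dist v x + 1 ∨ G.dist v x = G.dist v y + 1 := by
  have hxy : G.dist x y = 1 := SimpleGraph.dist_eq_one_iff_adj.mpr h
  have hyx : G.dist y x = 1 := SimpleGraph.dist_eq_one_iff_adj.mpr h.symm
  have h1 : G.dist v y ≤ G.dist v x + 1 := by
    have := hG.isConnected.dist_triangle (u := v) (v := x) (w := y)
    omega
  have h2 : G.dist v x ≤ G.dist v y + 1 := by
    have := hG.isConnected.dist_triangle (u := v) (v := y) (w := x)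
    omega
  have := adj_dist_ne hG v h
  omega

lemma no_turn (hG : G.IsTree) (v : V) {x y z : V} (hxy : G.Adj x y) (hyz : G.Adj y z)
    (hxz : x ≠ z) (h : G.dist v y = G.dist v x + 1) :
    G.dist v z = G.dist v y + 1 := by
  classical
  rcases adj_dist_cases hG v hyz with h' | h'
  · exact h'
  exfalso
  obtain ⟨q, _⟩ := hG.isConnected.exists_walk_length_eq_dist v x
  set p := q.bypass with hpdef
  have hp : p.IsPath := q.bypass_isPath
  have hplen : p.length = G.dist v x := path_length_eq_dist hG p hp
  obtain ⟨q', _⟩ := hG.isConnected.exists_walk_length_eq_dist v z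
  set r := q'.bypass with hrdef
  have hr : r.IsPath := q'.bypass_isPath
  have hrlen : r.length = G.dist v z := path_length_eq_dist hG r hr
  have hyp : y ∉ p.support := by
    intro hy
    have h1 : (p.takeUntil y hy).length = G.dist v y :=
      path_length_eq_dist hG _ (hp.takeUntil hy)
    have h2 := Walk.length_takeUntil_le p hy
    omega
  have hyr : y ∉ r.support := by
    intro hy
    have h1 : (r.takeUntil y hy).length = G.dist v y :=
      path_length_eq_dist hG _ (hr.takeUntil hy)
    have h2 := Walk.length_takeUntil_le r hy
    omega
  have hp1 : (p.concat hxy).IsPath := concat_isPath hp hxy hyp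
  have hr1 : (r.concat hyz.symm).IsPath := concat_isPath hr hyz.symm hyr
  have huniq : (⟨p.concat hxy, hp1⟩ : G.Path v y) = ⟨r.concat hyz.symm, hr1⟩ :=
    hG.IsAcyclic.path_unique _ _
  have he : p.concat hxy = r.concat hyz.symm := congrArg Subtype.val huniq
  obtain ⟨hv, -⟩ := Walk.concat_inj he
  exact hxz hv

end TreeProjAux


/-- let `T` be a tree quadratically embedded via `ι` in a real Hilbert
space (`‖ι a - ι b‖² = d(a,b)`), `S` a nonempty subtree, and `K` the closed affine
span of `ι(S)`.  If `m ∈ S` is the vertex of `S` closest to `v` in the graph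
metric, then `ι m` is the orthogonal projection of `ι v` onto `K`, i.e. `ι m`
is the point of `K` closest to `ι v`. -/
theorem tree_projection_eq_closest_vertex
    {V : Type*} (G : SimpleGraph V) (hG : G.IsTree)
    {H : Type*} [NormedAddCommGroup H] [InnerProductSpace ℝ H] [CompleteSpace H]
    (ι : V → H) (hι : ∀ a b : V, ‖ι a - ι b‖ ^ 2 = (G.dist a b : ℝ))
    (S : Set V) (hS : S.Nonempty) (hconn : (G.induce S).Connected)
    (v : V) (m : V) (hm : m ∈ S) (hmin : ∀ w ∈ S, G.dist v m ≤ G.dist v w) :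
    ι m ∈ closure (affineSpan ℝ (ι '' S) : Set H) ∧
      ∀ y ∈ closure (affineSpan ℝ (ι '' S) : Set H), ‖ι v - ι m‖ ≤ ‖ι v - y‖ := by

  classical
  -- the graph-theoretic gate property
  have key : ∀ w ∈ S, G.dist v w = G.dist v m + G.dist m w := by
    intro w hw
    obtain ⟨q0⟩ := hconn.preconnected ⟨m, hm⟩ ⟨w, hw⟩
    set q := q0.bypass with hqdef
    have hqp : q.IsPath := q0.bypass_isPath
    let f : G.induce S →g G := ⟨Subtype.val, fun h => h⟩
    let p : G.Walk m w := q.map f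
    have hp : p.IsPath := Walk.map_isPath_of_injective Subtype.val_injective hqp
    have hsup : ∀ u, u ∈ p.support → u ∈ S := by
      intro u hu
      rw [Walk.support_map] at hu
      obtain ⟨u', _, rfl⟩ := List.mem_map.mp hu
      exact u'.2
    have hplen : p.length = G.dist m w := TreeProjAux.path_length_eq_dist hG p hp
    have hstep : ∀ i, i ≤ p.length → G.dist v (p.getVert i) = G.dist v m + i := by
      intro i
      induction i using Nat.strong_induction_on with
      | _ i ih =>
        match i with
        | 0 => intro _; simp [Walk.getVert_zero]
        | 1 =>
          intro h1
          have hadj : G.Adj (p.getVert 0) (p.getVert 1) := p.adj_getVert_succ (by omega)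
          rcases TreeProjAux.adj_dist_cases hG v hadj with hc | hc
          · rw [hc]
            simp [Walk.getVert_zero]
          · exfalso
            have hmem := hmin (p.getVert 1) (hsup _ (TreeProjAux.getVert_mem_support p 1))
            rw [Walk.getVert_zero] at hc
            omega
        | (k + 2) =>
          intro hk2
          have hk := ih k (by omega) (by omega)
          have hk1 := ih (k + 1) (by omega) (by omega)
          have hadj1 : G.Adj (p.getVert k) (p.getVert (k + 1)) := p.adj_getVert_succ (by omega)
          have hadj2 : G.Adj (p.getVert (k + 1)) (p.getVert (k + 2)) :=
            p.adj_getVert_succ (by omega)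
          have hne : p.getVert k ≠ p.getVert (k + 2) := by
            intro hcon
            have := TreeProjAux.getVert_injOn hp k (k + 2) (by omega) (by omega) hcon
            omega
          have := TreeProjAux.no_turn hG v hadj1 hadj2 hne (by omega)
          omega
    have := hstep p.length le_rfl
    rw [Walk.getVert_length] at this
    omega
  -- orthogonality of `ι v - ι m` to differences of points of `ι '' S`
  have key2 : ∀ w ∈ S, ⟪ι v - ι m, ι w - ι m⟫_ℝ = 0 := by
    intro w hw
    have e : ‖ι v - ι w‖ ^ 2 = ‖ι v - ι m‖ ^ 2 + ‖ι m - ι w‖ ^ 2 := by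
      rw [hι v w, hι v m, hι m w]
      rw [key w hw]
      push_cast
      ring
    have hexp : ι v - ι w = (ι v - ι m) - (ι w - ι m) := by abel
    rw [hexp, norm_sub_sq_real] at e
    have hrev : ‖ι m - ι w‖ = ‖ι w - ι m‖ := norm_sub_rev _ _
    rw [hrev] at e
    linarith
  have hmemA : ι m ∈ affineSpan ℝ (ι '' S) :=
    subset_affineSpan ℝ (ι '' S) (Set.mem_image_of_mem ι hm)
  have hdir : vectorSpan ℝ (ι '' S) ≤ (ℝ ∙ (ι v - ι m))ᗮ := by
    rw [vectorSpan_def]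
    rw [Submodule.span_le]
    rintro u hu
    rw [Set.mem_vsub] at hu
    obtain ⟨a, ⟨w, hw, rfl⟩, b, ⟨w', hw', rfl⟩, rfl⟩ := hu
    rw [SetLike.mem_coe, Submodule.mem_orthogonal_singleton_iff_inner_right]
    have h1 : ι w -ᵥ ι w' = (ι w - ι m) - (ι w' - ι m) := by
      simp only [vsub_eq_sub]; abel
    rw [h1, inner_sub_right, key2 w hw, key2 w' hw']
    ring
  have horth : ∀ y ∈ closure (affineSpan ℝ (ι '' S) : Set H), ⟪ι v - ι m, y - ι m⟫_ℝ = 0 := by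
    have hA : (affineSpan ℝ (ι '' S) : Set H) ⊆ {z : H | ⟪ι v - ι m, z - ι m⟫_ℝ = 0} := by
      intro y hy
      have hv : y -ᵥ ι m ∈ (affineSpan ℝ (ι '' S)).direction :=
        AffineSubspace.vsub_mem_direction hy hmemA
      rw [direction_affineSpan] at hv
      have := hdir hv
      rw [Submodule.mem_orthogonal_singleton_iff_inner_right] at this
      simpa using this
    have hcl : IsClosed {z : H | ⟪ι v - ι m, z - ι m⟫_ℝ = 0} := by
      have hcont : Continuous fun z : H => ⟪ι v - ι m, z - ι m⟫_ℝ :=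
        Continuous.inner continuous_const (continuous_id.sub continuous_const)
      exact isClosed_eq hcont continuous_const
    intro y hy
    exact closure_minimal hA hcl hy
  refine ⟨subset_closure hmemA, ?_⟩
  intro y hy
  have h0 := horth y hy
  have hsq : ‖ι v - y‖ ^ 2 = ‖ι v - ι m‖ ^ 2 + ‖y - ι m‖ ^ 2 := by
    have hexp : ι v - y = (ι v - ι m) - (y - ι m) := by abel
    rw [hexp, norm_sub_sq_real, h0]
    ring
  nlinarith [norm_nonneg (ι v - y), norm_nonneg (ι v - ι m), norm_nonneg (y - ι m)]
end

section
/- Let G be a locally compact group with left Haar measure, π an orthogonal (or unitary) representation of G on a separable Hilbert space that has almost invariant vectors but no nonzero invariant vector, and f : G → [1, ∞) a proper continuous function. Then there exists a 1-cocycle c : G → ⊕_{n∈ℕ} H_π (for the representation π^{⊕ℕ}) of the form c(g) = (π(g)F(n) − F(n))_{n∈ℕ} with F(n) = ξ_n/√n for unit vectors ξ_n, such that ‖c(g)‖ ≤ f(g) for all g ∈ G and c is not a coboundary (equivalently, the associated affine isometric action has no fixed point). -/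
open Filter Topology
open scoped ENNReal

private lemma aux_pow_sq (n : ℕ) : ((2:ℝ)⁻¹ ^ n) ^ 2 = (4:ℝ)⁻¹ ^ n := by
  rw [← pow_mul, mul_comm, pow_mul]
  norm_num

private lemma aux_nine : ∀ k : ℕ, 4 * ((k : ℝ) + 2) + 1/3 ≤ 9 ^ (k + 1) := by
  intro k
  induction k with
  | zero => norm_num
  | succ k ih =>
    have h9 : (1:ℝ) ≤ 9 ^ (k + 1) := one_le_pow₀ (by norm_num)
    push_cast
    push_cast at ih
    calc 4 * ((k:ℝ) + 1 + 2) + 1/3 = (4 * ((k:ℝ) + 2) + 1/3) + 4 := by ring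
      _ ≤ 9 ^ (k + 1 + 1) := by
          have hp : (9:ℝ) ^ (k + 1 + 1) = 9 * 9 ^ (k + 1) := by ring
          linarith
  
private lemma aux_tail {t : ℕ → ℝ} (htnn : ∀ n, 0 ≤ t n) (hsum : Summable t)
    {r : ℝ} (htle : ∀ n : ℕ, r ≤ 3 ^ n → t n ≤ (4:ℝ)⁻¹ ^ n)
    {N : ℕ} (hN1 : 1 ≤ N) (hrN : r ≤ 3 ^ N) :
    ∑' i : ℕ, t (i + N) ≤ 1/3 := by
  have hsummable : Summable fun i => t (i + N) := (summable_nat_add_iff N).2 hsum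
  have hgeo : Summable fun i : ℕ => (4:ℝ)⁻¹ ^ (i + 1) := by
    apply Summable.comp_injective _ (add_left_injective 1)
    exact summable_geometric_of_lt_one (by norm_num) (by norm_num)
  calc ∑' i : ℕ, t (i + N) ≤ ∑' i : ℕ, (4:ℝ)⁻¹ ^ (i + 1) := by
        apply Summable.tsum_le_tsum _ hsummable hgeo
        intro i
        calc t (i + N) ≤ (4:ℝ)⁻¹ ^ (i + N) := by
              apply htle
              exact hrN.trans (pow_le_pow_right₀ (by norm_num) (Nat.le_add_left N i))
          _ ≤ (4:ℝ)⁻¹ ^ (i + 1) :=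
              pow_le_pow_of_le_one (by norm_num) (by norm_num) (Nat.add_le_add_left hN1 i)
    _ = (4:ℝ)⁻¹ * ∑' i : ℕ, (4:ℝ)⁻¹ ^ i := by
        rw [← tsum_mul_left]
        congr 1
        funext i
        rw [pow_succ]
        ring
    _ = 1/3 := by
        rw [tsum_geometric_of_lt_one (by norm_num) (by norm_num)]
        norm_num

private lemma aux_tsum_bound {t : ℕ → ℝ} {r : ℝ} (hr : 1 ≤ r)
    (ht0 : t 0 = 0) (htnn : ∀ n, 0 ≤ t n) (ht4 : ∀ n, t n ≤ 4)
    (htle : ∀ n : ℕ, r ≤ 3 ^ n → t n ≤ (4:ℝ)⁻¹ ^ n) (hsum : Summable t) :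
    ∑' n : ℕ, t n ≤ r ^ 2 := by
  have hr1 : (1:ℝ) ≤ r ^ 2 := one_le_pow₀ hr
  rcases le_or_gt r 3 with hr3 | hr3
  · have h0 := (Summable.sum_add_tsum_nat_add 1 hsum).symm
    calc ∑' n : ℕ, t n = (∑ i ∈ Finset.range 1, t i) + ∑' i : ℕ, t (i + 1) := h0
      _ ≤ 0 + 1/3 := by
          apply add_le_add
          · simp [ht0]
          · exact aux_tail htnn hsum htle le_rfl (by simpa using hr3)
      _ ≤ r ^ 2 := by linarith
  · have hex : ∃ n : ℕ, r ≤ 3 ^ n := by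
      obtain ⟨M, hM⟩ := pow_unbounded_of_one_lt r (by norm_num : (1:ℝ) < 3)
      exact ⟨M, hM.le⟩
    set N := Nat.find hex with hN
    have hNspec : r ≤ 3 ^ N := Nat.find_spec hex
    have hN2 : 2 ≤ N := by
      by_contra hcon
      push_neg at hcon
      interval_cases N
      · norm_num at hNspec; linarith
      · norm_num at hNspec; linarith
    have hNmin : (3:ℝ) ^ (N - 1) < r := by
      have := Nat.find_min hex (m := N - 1) (by omega)
      push_neg at this
      exact this
    obtain ⟨k, hk⟩ : ∃ k, N = k + 2 := ⟨N - 2, by omega⟩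
    have hfin : (∑ i ∈ Finset.range N, t i) ≤ (N : ℝ) * 4 := by
      calc (∑ i ∈ Finset.range N, t i) ≤ ∑ i ∈ Finset.range N, (4:ℝ) :=
            Finset.sum_le_sum fun i _ => ht4 i
        _ = (N : ℝ) * 4 := by rw [Finset.sum_const, Finset.card_range]; simp [mul_comm]
    have h9 : (9:ℝ) ^ (N - 1) ≤ r ^ 2 := by
      have h1 : ((3:ℝ) ^ (N - 1)) ^ 2 ≤ r ^ 2 :=
        pow_le_pow_left₀ (by positivity) hNmin.le 2
      calc (9:ℝ) ^ (N - 1) = ((3:ℝ) ^ 2) ^ (N - 1) := by norm_num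
        _ = ((3:ℝ) ^ (N - 1)) ^ 2 := by rw [← pow_mul, mul_comm, pow_mul]
        _ ≤ r ^ 2 := h1
    have haux : 4 * ((N : ℝ)) + 1/3 ≤ (9:ℝ) ^ (N - 1) := by
      have := aux_nine k
      rw [hk]
      have hkN : (k + 2) - 1 = k + 1 := by omega
      rw [hkN]
      push_cast
      push_cast at this
      linarith
    calc ∑' n : ℕ, t n = (∑ i ∈ Finset.range N, t i) + ∑' i : ℕ, t (i + N) :=
          (Summable.sum_add_tsum_nat_add N hsum).symm
      _ ≤ (N : ℝ) * 4 + 1/3 := add_le_add hfin (aux_tail htnn hsum htle (by omega) hNspec)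
      _ ≤ (9:ℝ) ^ (N - 1) := by linarith
      _ ≤ r ^ 2 := h9

private lemma aux_conv {H : Type*} [NormedAddCommGroup H] (u : ℕ → H) :
    (fun n => ‖u n‖ ^ ((2:ℝ≥0∞)).toReal) = fun n => ‖u n‖ ^ 2 := by
  funext n
  rw [show ((2:ℝ≥0∞)).toReal = 2 by norm_num,
    show (2:ℝ) = ((2:ℕ):ℝ) by norm_num, Real.rpow_natCast]


private lemma aux_summable {w : ℕ → ℝ} (hnn : ∀ n, 0 ≤ w n) (M : ℕ)
    (hb : ∀ n : ℕ, w (n + M) ≤ (4:ℝ)⁻¹ ^ n) : Summable w := by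
  rw [← summable_nat_add_iff M]
  exact Summable.of_nonneg_of_le (fun n => hnn _) hb
    (summable_geometric_of_lt_one (by norm_num) (by norm_num))

private lemma aux_shift {w : ℕ → ℝ} (h : Summable w) (k : ℕ) :
    Summable fun n => w (n + k) :=
  (summable_nat_add_iff k).2 h

private lemma aux_split {w : ℕ → ℝ} (hsum : Summable w) (N : ℕ) :
    ∑' n : ℕ, w n = (∑ i ∈ Finset.range N, w i) + ∑' i : ℕ, w (i + N) :=
  (Summable.sum_add_tsum_nat_add N hsum).symm

private lemma aux_tail2 {w : ℕ → ℝ} (hsum : Summable w) (N : ℕ)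
    (hb : ∀ i : ℕ, w (i + N) ≤ 4 * (4:ℝ)⁻¹ ^ (i + N)) :
    ∑' i : ℕ, w (i + N) ≤ (16/3) * (4:ℝ)⁻¹ ^ N := by
  have hgeo2 : Summable fun i : ℕ => 4 * (4:ℝ)⁻¹ ^ N * (4:ℝ)⁻¹ ^ i :=
    (summable_geometric_of_lt_one (by norm_num) (by norm_num)).mul_left _
  calc ∑' i : ℕ, w (i + N)
      ≤ ∑' i : ℕ, 4 * (4:ℝ)⁻¹ ^ N * (4:ℝ)⁻¹ ^ i := by
        apply Summable.tsum_le_tsum _ (aux_shift hsum N) hgeo2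
        intro i
        calc w (i + N) ≤ 4 * (4:ℝ)⁻¹ ^ (i + N) := hb i
          _ = 4 * (4:ℝ)⁻¹ ^ N * (4:ℝ)⁻¹ ^ i := by rw [pow_add]; ring
    _ = 4 * (4:ℝ)⁻¹ ^ N * (1 - 4⁻¹)⁻¹ := by
        rw [tsum_mul_left, tsum_geometric_of_lt_one (by norm_num) (by norm_num)]
    _ = (16/3) * (4:ℝ)⁻¹ ^ N := by
        rw [show ((1:ℝ) - 4⁻¹)⁻¹ = 4/3 by norm_num]
        ring

set_option maxHeartbeats 1000000 in
private lemma aux_cont {G : Type*} [TopologicalSpace G]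
    {H : Type*} [NormedAddCommGroup H]
    (f : G → ℝ) (hfcont : Continuous f)
    (d : G → ℕ → H) (hdcont : ∀ n : ℕ, Continuous fun g => d g n)
    (hble : ∀ (g : G) (n : ℕ), f g ≤ 3 ^ n → ‖d g n‖ ≤ (2:ℝ)⁻¹ ^ n)
    (hmem : ∀ g, Memℓp (d g) 2) :
    Continuous (fun g => (⟨d g, hmem g⟩ : lp (fun _ : ℕ => H) 2)) := by
  set c : G → lp (fun _ : ℕ => H) 2 := fun g => ⟨d g, hmem g⟩ with hc
  rw [continuous_iff_continuousAt]
  intro g₀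
  rw [ContinuousAt, Metric.tendsto_nhds]
  intro ε hε
  obtain ⟨N, hN3, hN4⟩ : ∃ N : ℕ, f g₀ + 1 ≤ 3 ^ N ∧ (4:ℝ)⁻¹ ^ N < ε ^ 2 / 12 := by
    obtain ⟨N₁, hN₁⟩ := pow_unbounded_of_one_lt (f g₀ + 1) (by norm_num : (1:ℝ) < 3)
    obtain ⟨N₂, hN₂⟩ := exists_pow_lt_of_lt_one
      (show (0:ℝ) < ε ^ 2 / 12 by positivity) (by norm_num : (4:ℝ)⁻¹ < 1)
    exact ⟨max N₁ N₂,
      hN₁.le.trans (pow_le_pow_right₀ (by norm_num) (le_max_left _ _)),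
      lt_of_le_of_lt (pow_le_pow_of_le_one (by norm_num) (by norm_num)
        (le_max_right _ _)) hN₂⟩
  have hU1 : {g : G | f g < f g₀ + 1} ∈ 𝓝 g₀ := by
    apply IsOpen.mem_nhds (isOpen_lt hfcont continuous_const)
    simp
  have hScont : Continuous fun g : G =>
      ∑ n ∈ Finset.range N, ‖d g n - d g₀ n‖ ^ 2 := by
    apply continuous_finset_sum
    intro n _
    exact (((hdcont n).sub continuous_const).norm.pow 2)
  have hU2 : {g : G | (∑ n ∈ Finset.range N, ‖d g n - d g₀ n‖ ^ 2) < ε ^ 2 / 2}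
      ∈ 𝓝 g₀ := by
    apply IsOpen.mem_nhds (isOpen_lt hScont continuous_const)
    show (∑ n ∈ Finset.range N, ‖d g₀ n - d g₀ n‖ ^ 2) < ε ^ 2 / 2
    simp only [sub_self, norm_zero, ne_eq, OfNat.ofNat_ne_zero, not_false_eq_true,
      zero_pow, Finset.sum_const_zero]
    positivity
  filter_upwards [hU1, hU2] with g hg1 hg2
  rw [dist_eq_norm]
  have hgN : f g ≤ 3 ^ N := hg1.le.trans hN3
  have hg0N : f g₀ ≤ 3 ^ N := by linarith [hN3]
  have hcoord : ∀ n : ℕ, ((c g - c g₀ : lp (fun _ : ℕ => H) 2) : ∀ _ : ℕ, H) n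
      = d g n - d g₀ n := by
    intro n
    rw [lp.coeFn_sub]
    rfl
  have he : (fun n => ‖((c g - c g₀ : lp (fun _ : ℕ => H) 2) : ∀ _ : ℕ, H) n‖
      ^ ((2:ℝ≥0∞)).toReal) = fun n => ‖d g n - d g₀ n‖ ^ 2 := by
    rw [aux_conv]
    funext n
    rw [hcoord n]
  have hsub_sum : Summable fun n => ‖d g n - d g₀ n‖ ^ 2 := by
    have := (lp.memℓp (c g - c g₀)).summable (by norm_num)
    rwa [he] at this
  have hnormsq : ‖c g - c g₀‖ ^ 2 = ∑' n : ℕ, ‖d g n - d g₀ n‖ ^ 2 := by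
    have h0 := lp.norm_rpow_eq_tsum (p := 2) (by norm_num) (c g - c g₀)
    rw [he] at h0
    rw [← h0, show ((2:ℝ≥0∞)).toReal = 2 by norm_num,
      show (2:ℝ) = ((2:ℕ):ℝ) by norm_num, Real.rpow_natCast]
  have hbb : ∀ i : ℕ, ‖d g (i + N) - d g₀ (i + N)‖ ^ 2 ≤ 4 * (4:ℝ)⁻¹ ^ (i + N) := by
    intro i
    have hgi : f g ≤ 3 ^ (i + N) :=
      hgN.trans (pow_le_pow_right₀ (by norm_num) (Nat.le_add_left N i))
    have hg0i : f g₀ ≤ 3 ^ (i + N) :=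
      hg0N.trans (pow_le_pow_right₀ (by norm_num) (Nat.le_add_left N i))
    have h1 := hble g (i + N) hgi
    have h2 := hble g₀ (i + N) hg0i
    have h3 : ‖d g (i + N) - d g₀ (i + N)‖ ≤ 2 * (2:ℝ)⁻¹ ^ (i + N) := by
      calc ‖d g (i + N) - d g₀ (i + N)‖
          ≤ ‖d g (i + N)‖ + ‖d g₀ (i + N)‖ := norm_sub_le _ _
        _ ≤ 2 * (2:ℝ)⁻¹ ^ (i + N) := by linarith
    calc ‖d g (i + N) - d g₀ (i + N)‖ ^ 2
        ≤ (2 * (2:ℝ)⁻¹ ^ (i + N)) ^ 2 := pow_le_pow_left₀ (norm_nonneg _) h3 2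
      _ = 4 * (4:ℝ)⁻¹ ^ (i + N) := by rw [mul_pow, aux_pow_sq]; norm_num
  have htail2 := aux_tail2 hsub_sum N hbb
  have hsplit := aux_split hsub_sum N
  have hlt : ‖c g - c g₀‖ ^ 2 < ε ^ 2 := by
    rw [hnormsq, hsplit]
    have ht2 : (16/3) * (4:ℝ)⁻¹ ^ N < ε ^ 2 / 2 := by nlinarith [hN4]
    calc (∑ i ∈ Finset.range N, ‖d g i - d g₀ i‖ ^ 2)
        + ∑' i : ℕ, ‖d g (i + N) - d g₀ (i + N)‖ ^ 2
        < ε ^ 2 / 2 + (16/3) * (4:ℝ)⁻¹ ^ N := add_lt_add_of_lt_of_le hg2 htail2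
      _ < ε ^ 2 := by linarith
  exact lt_of_pow_lt_pow_left₀ 2 hε.le hlt

set_option maxHeartbeats 1000000 in
/-- let `G` be a locally compact group, `π` an orthogonal
representation of `G` on a separable real Hilbert space `H` with almost invariant
vectors but no nonzero invariant vector, and `f : G → [1, ∞)` a proper continuous
function.  Then there is a continuous 1-cocycle `c : G → ℓ²(ℕ, H)` for `π^{⊕ℕ}`
of the form `c(g) = (π(g)F(n) - F(n))_n` with `F(n) = ξ_n/√n` for unit vectors
`ξ_n`, satisfying `‖c(g)‖ ≤ f(g)` for all `g`, and which is not a coboundary. -/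
theorem exists_cocycle_of_almost_invariant_vectors
    {G : Type*} [Group G] [TopologicalSpace G] [IsTopologicalGroup G]
    [LocallyCompactSpace G]
    {H : Type*} [NormedAddCommGroup H] [InnerProductSpace ℝ H] [CompleteSpace H]
    [TopologicalSpace.SeparableSpace H]
    (π : G →* (H ≃ₗᵢ[ℝ] H)) (hπcont : ∀ ξ : H, Continuous fun g : G => π g ξ)
    (halmost : ∀ ε > (0 : ℝ), ∀ K : Set G, IsCompact K →
      ∃ ξ : H, ‖ξ‖ = 1 ∧ ∀ g ∈ K, ‖π g ξ - ξ‖ < ε)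
    (hnoinv : ∀ ξ : H, (∀ g : G, π g ξ = ξ) → ξ = 0)
    (f : G → ℝ) (hfcont : Continuous f) (hf1 : ∀ g, 1 ≤ f g)
    (hfproper : ∀ R : ℝ, IsCompact {g : G | f g ≤ R}) :
    ∃ (ξ : ℕ → H) (c : G → lp (fun _ : ℕ => H) 2),
      (∀ n, ‖ξ n‖ = 1) ∧
      (∀ (g : G) (n : ℕ), (c g : ∀ _ : ℕ, H) n
          = π g ((Real.sqrt n)⁻¹ • ξ n) - (Real.sqrt n)⁻¹ • ξ n) ∧
      Continuous c ∧
      (∀ g h : G, ∀ n : ℕ, (c (g * h) : ∀ _ : ℕ, H) n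
          = (c g : ∀ _ : ℕ, H) n + π g ((c h : ∀ _ : ℕ, H) n)) ∧
      (∀ g : G, ‖c g‖ ≤ f g) ∧
      ¬ ∃ v : lp (fun _ : ℕ => H) 2, ∀ (g : G) (n : ℕ),
          (c g : ∀ _ : ℕ, H) n = π g ((v : ∀ _ : ℕ, H) n) - (v : ∀ _ : ℕ, H) n := by
  classical
  have hchoice : ∀ n : ℕ, ∃ x : H, ‖x‖ = 1 ∧
      ∀ g : G, f g ≤ 3 ^ n → ‖π g x - x‖ < (2:ℝ)⁻¹ ^ n := by
    intro n
    obtain ⟨x, h1, h2⟩ := halmost ((2:ℝ)⁻¹ ^ n) (by positivity)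
      {g : G | f g ≤ 3 ^ n} (hfproper _)
    exact ⟨x, h1, fun g hg => h2 g hg⟩
  choose ξ hξ1 hξ2 using hchoice
  set F : ℕ → H := fun n => (Real.sqrt n)⁻¹ • ξ n with hF
  set d : G → ℕ → H := fun g n => π g (F n) - F n with hd
  have hdsmul : ∀ (g : G) (n : ℕ), d g n = (Real.sqrt n)⁻¹ • (π g (ξ n) - ξ n) := by
    intro g n
    simp only [hd, hF, smul_sub, map_smul]
  have hdnorm : ∀ (g : G) (n : ℕ), ‖d g n‖ = (Real.sqrt n)⁻¹ * ‖π g (ξ n) - ξ n‖ := by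
    intro g n
    rw [hdsmul, norm_smul, Real.norm_eq_abs, abs_of_nonneg (by positivity)]
  have hπ2 : ∀ (g : G) (x : H), ‖π g x - x‖ ≤ 2 * ‖x‖ := by
    intro g x
    calc ‖π g x - x‖ ≤ ‖π g x‖ + ‖x‖ := norm_sub_le _ _
      _ = 2 * ‖x‖ := by rw [(π g).norm_map]; ring
  have hinv1 : ∀ n : ℕ, (Real.sqrt n)⁻¹ ≤ 1 := by
    intro n
    rcases Nat.eq_zero_or_pos n with h | h
    · simp [h]
    · exact inv_le_one_of_one_le₀ (Real.one_le_sqrt.2 (by exact_mod_cast h))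
  have hb2 : ∀ (g : G) (n : ℕ), ‖d g n‖ ≤ 2 := by
    intro g n
    rw [hdnorm]
    calc (Real.sqrt n)⁻¹ * ‖π g (ξ n) - ξ n‖ ≤ 1 * (2 * ‖ξ n‖) :=
          mul_le_mul (hinv1 n) (hπ2 g (ξ n)) (norm_nonneg _) zero_le_one
      _ = 2 := by rw [hξ1 n]; ring
  have hble : ∀ (g : G) (n : ℕ), f g ≤ 3 ^ n → ‖d g n‖ ≤ (2:ℝ)⁻¹ ^ n := by
    intro g n hg
    rw [hdnorm]
    calc (Real.sqrt n)⁻¹ * ‖π g (ξ n) - ξ n‖ ≤ 1 * ((2:ℝ)⁻¹ ^ n) :=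
          mul_le_mul (hinv1 n) (hξ2 n g hg).le (norm_nonneg _) zero_le_one
      _ = (2:ℝ)⁻¹ ^ n := one_mul _
  have hbsq : ∀ (g : G) (n : ℕ), f g ≤ 3 ^ n → ‖d g n‖ ^ 2 ≤ (4:ℝ)⁻¹ ^ n := by
    intro g n hg
    rw [← aux_pow_sq]
    exact pow_le_pow_left₀ (norm_nonneg _) (hble g n hg) 2
  have hd0 : ∀ g : G, d g 0 = 0 := by
    intro g
    simp [hd, hF]
  have hsum : ∀ g : G, Summable fun n => ‖d g n‖ ^ 2 := by
    intro g
    obtain ⟨M, hM⟩ := pow_unbounded_of_one_lt (f g) (by norm_num : (1:ℝ) < 3)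
    apply aux_summable (fun n => sq_nonneg _) M
    intro n
    calc ‖d g (n + M)‖ ^ 2 ≤ (4:ℝ)⁻¹ ^ (n + M) := by
          apply hbsq
          exact hM.le.trans (pow_le_pow_right₀ (by norm_num) (Nat.le_add_left M n))
      _ ≤ (4:ℝ)⁻¹ ^ n :=
          pow_le_pow_of_le_one (by norm_num) (by norm_num) (Nat.le_add_right n M)
  have hmem : ∀ g : G, Memℓp (d g) 2 := by
    intro g
    apply memℓp_gen
    rw [aux_conv]
    exact hsum g
  set c : G → lp (fun _ : ℕ => H) 2 := fun g => ⟨d g, hmem g⟩ with hc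
  have hts : ∀ g : G, ∑' n : ℕ, ‖d g n‖ ^ 2 ≤ (f g) ^ 2 := by
    intro g
    apply aux_tsum_bound (hf1 g) (by simp [hd0 g]) (fun n => sq_nonneg _)
      (fun n => ?_) (fun n hn => hbsq g n hn) (hsum g)
    calc ‖d g n‖ ^ 2 ≤ 2 ^ 2 := pow_le_pow_left₀ (norm_nonneg _) (hb2 g n) 2
      _ = 4 := by norm_num
  have hnorm : ∀ g : G, ‖c g‖ ≤ f g := by
    intro g
    apply lp.norm_le_of_tsum_le (by norm_num) (le_trans zero_le_one (hf1 g))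
    have h1 : (fun n => ‖(c g : ∀ _ : ℕ, H) n‖ ^ ((2:ℝ≥0∞)).toReal)
        = fun n => ‖d g n‖ ^ 2 := aux_conv (d g)
    rw [h1]
    have h2 : f g ^ ((2:ℝ≥0∞)).toReal = f g ^ 2 := by
      rw [show ((2:ℝ≥0∞)).toReal = 2 by norm_num,
        show (2:ℝ) = ((2:ℕ):ℝ) by norm_num, Real.rpow_natCast]
    rw [h2]
    exact hts g
  have hdcont : ∀ n : ℕ, Continuous fun g : G => d g n := by
    intro n
    exact (hπcont (F n)).sub continuous_const
  have hcont : Continuous c := aux_cont f hfcont d hdcont hble hmem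
  have hcocycle : ∀ g h : G, ∀ n : ℕ, d (g * h) n = d g n + π g (d h n) := by
    intro g h n
    have hmul : π (g * h) (F n) = π g (π h (F n)) := by
      rw [map_mul]; rfl
    simp only [hd, hmul, map_sub]
    abel
  refine ⟨ξ, c, hξ1, fun g n => rfl, hcont, fun g h n => hcocycle g h n, hnorm, ?_⟩
  rintro ⟨v, hv⟩
  have hvF : ∀ n : ℕ, (v : ∀ _ : ℕ, H) n = F n := by
    intro n
    have hzero : F n - (v : ∀ _ : ℕ, H) n = 0 := by
      apply hnoinv
      intro g
      have e : π g (F n) - F n = π g ((v : ∀ _ : ℕ, H) n) - (v : ∀ _ : ℕ, H) n :=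
        hv g n
      rw [map_sub]
      exact sub_eq_sub_iff_sub_eq_sub.mp e
    exact (sub_eq_zero.mp hzero).symm
  have hvsum : Summable fun n => ‖(v : ∀ _ : ℕ, H) n‖ ^ 2 := by
    have := (lp.memℓp v).summable (by norm_num)
    rwa [aux_conv] at this
  have hval : ∀ n : ℕ, ‖(v : ∀ _ : ℕ, H) (n + 1)‖ ^ 2 = (((n:ℝ) + 1))⁻¹ := by
    intro n
    rw [hvF, hF]
    rw [norm_smul, Real.norm_eq_abs, hξ1, mul_one, abs_of_nonneg (by positivity),
      inv_pow, Real.sq_sqrt (by positivity)]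
    push_cast
    ring
  have hsum1 : Summable fun n : ℕ => (((n:ℝ) + 1))⁻¹ := by
    have h0 := aux_shift hvsum 1
    rwa [funext hval] at h0
  have hfinal : Summable (fun n : ℕ => ((n:ℝ))⁻¹) := by
    apply (summable_nat_add_iff 1).1
    have he : (fun n : ℕ => (((n + 1 : ℕ)):ℝ)⁻¹) = fun n : ℕ => (((n:ℝ) + 1))⁻¹ := by
      funext n
      push_cast
      ring
    rw [show (fun n : ℕ => ((((n : ℕ) + 1 : ℕ)):ℝ)⁻¹) = fun n : ℕ => (((n:ℝ) + 1))⁻¹ from he]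
    exact hsum1
  exact Real.not_summable_natCast_inv hfinal
end
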